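/- arXiv:1011.4758 — 3 statements merged into one kernel-verified Lean document; each statement's English description precedes it below -/
import Mathlib

section
/- Let F be a twisting cocycle for the Hopf algebra H. Then the elements ϑ := Σ γ(F₁)F₂ and ζ := Σ F̄₂ γ⁻¹(F̄₁) are invertible in H, with ϑ⁻¹ = γ(ζ) and ζ⁻¹ = γ⁻¹(ϑ); that is, ϑ·γ(ζ) = 1 = γ(ζ)·ϑ and ζ·γ⁻¹(ϑ) = 1 = γ⁻¹(ϑ)·ζ. -/
open TensorProduct

noncomputable section

variable (k : Type*) [Field k] (H : Type*) [Ring H] [HopfAlgebra k H]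

/-- The comultiplication of `H` as a linear map. -/
noncomputable def comulL : H →ₗ[k] H ⊗[k] H := Coalgebra.comul

/-- The counit of `H` as a linear map. -/
noncomputable def counitL : H →ₗ[k] k := Coalgebra.counit

/-- The antipode of `H`. -/
noncomputable def anti : H →ₗ[k] H := HopfAlgebra.antipode (R := k)

/-- `F` together with its inverse `Finv` is a twisting (Drinfeld) cocycle:
`F` is invertible, `(Δ⊗id)(F)·(F⊗1) = (id⊗Δ)(F)·(1⊗F)` and `(ε⊗id)(F) = 1 = (id⊗ε)(F)`. -/
def IsCocycle (F Finv : H ⊗[k] H) : Prop :=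
  F * Finv = 1 ∧ Finv * F = 1 ∧
  (TensorProduct.assoc k H H H) ((TensorProduct.map (comulL k H) LinearMap.id F) * (F ⊗ₜ 1))
    = (TensorProduct.map LinearMap.id (comulL k H) F) * ((1 : H) ⊗ₜ F) ∧
  (TensorProduct.lid k H) (TensorProduct.map (counitL k H) LinearMap.id F) = 1 ∧
  (TensorProduct.rid k H) (TensorProduct.map LinearMap.id (counitL k H) F) = 1

/-- `ϑ = Σ γ(F₁)F₂`. -/
noncomputable def theta (F : H ⊗[k] H) : H :=
  LinearMap.mul' k H (TensorProduct.map (anti k H) LinearMap.id F)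

/-- `ζ = Σ F̄₂ γ⁻¹(F̄₁)`, where `γinv` is the inverse of the antipode and `Finv = Σ F̄₁⊗F̄₂`. -/
noncomputable def zeta (γinv : H →ₗ[k] H) (Finv : H ⊗[k] H) : H :=
  LinearMap.mul' k H (TensorProduct.map LinearMap.id γinv ((TensorProduct.comm k H H) Finv))

/-- `R` (with inverse `Rinv`) is a triangular structure: `R` is invertible,
`R Δ(h) = Δᵒᵖ(h) R`, the two hexagon identities `(Δ⊗id)(R) = R₁₃R₂₃`,
`(id⊗Δ)(R) = R₁₃R₁₂` hold, and `R₂₁ R = 1`. -/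
def IsTriangular (R Rinv : H ⊗[k] H) : Prop :=
  R * Rinv = 1 ∧ Rinv * R = 1 ∧
  (∀ h : H, R * comulL k H h = (TensorProduct.comm k H H) (comulL k H h) * R) ∧
  (TensorProduct.assoc k H H H) (TensorProduct.map (comulL k H) LinearMap.id R)
    = (TensorProduct.map LinearMap.id (TensorProduct.mk k H H 1) R) * ((1 : H) ⊗ₜ R) ∧
  (TensorProduct.map LinearMap.id (comulL k H) R)
    = (TensorProduct.map LinearMap.id (TensorProduct.mk k H H 1) R) *
      ((TensorProduct.assoc k H H H) (R ⊗ₜ (1 : H))) ∧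
  ((TensorProduct.comm k H H) R) * R = 1

/-- `bcomp U V x y = (U x) ∘ₗ (V y)`, bilinearly in `x, y`. -/
noncomputable def bcomp {A B C : Type*} [AddCommMonoid A] [AddCommMonoid B] [AddCommMonoid C]
    [Module k A] [Module k B] [Module k C]
    (U : H →ₗ[k] B →ₗ[k] C) (V : H →ₗ[k] A →ₗ[k] B) : H →ₗ[k] H →ₗ[k] (A →ₗ[k] C) :=
  ((((LinearMap.llcomp k A B C) ∘ₗ U).flip) ∘ₗ V).flip

/-- Given an action `α` of `H` on `M`, the induced action of `H ⊗ H` on `M ⊗ M`: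
`pairAct α (x ⊗ y) (a ⊗ b) = (α x a) ⊗ (α y b)`. -/
noncomputable def pairAct {M : Type*} [AddCommMonoid M] [Module k M]
    (α : H →ₗ[k] M →ₗ[k] M) : H ⊗[k] H →ₗ[k] (M ⊗[k] M →ₗ[k] M ⊗[k] M) :=
  (TensorProduct.homTensorHomMap (RingHom.id k) M M M M) ∘ₗ (TensorProduct.map α α)

/-- `sandwich α β (x ⊗ y) a = α x * a * β y`. -/
noncomputable def sandwich {E : Type*} [Ring E] [Algebra k E]
    (α β : H →ₗ[k] E) : H ⊗[k] H →ₗ[k] E →ₗ[k] E :=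
  TensorProduct.lift (bcomp k H ((LinearMap.mul k E) ∘ₗ α) ((LinearMap.mul k E).flip ∘ₗ β))

/-- The adjoint action associated with `ρ : H →ₗ E`:
`adAct ρ h a = Σ ρ(h⁽¹⁾) a ρ(γ(h⁽²⁾))`. -/
noncomputable def adAct {E : Type*} [Ring E] [Algebra k E]
    (ρ : H →ₗ[k] E) : H →ₗ[k] E →ₗ[k] E :=
  (sandwich k H ρ (ρ ∘ₗ anti k H)) ∘ₗ comulL k H

/-- The twisted comultiplication `Δ̃(h) = F⁻¹ Δ(h) F`. -/
noncomputable def comulTw (F Finv : H ⊗[k] H) : H →ₗ[k] H ⊗[k] H :=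
  (LinearMap.mulRight k F) ∘ₗ (LinearMap.mulLeft k Finv) ∘ₗ comulL k H

/-- The twisted antipode `γ̃(h) = ϑ⁻¹ γ(h) ϑ`. -/
noncomputable def antiTw (ϑ ϑinv : H) : H →ₗ[k] H :=
  (LinearMap.mulRight k ϑ) ∘ₗ (LinearMap.mulLeft k ϑinv) ∘ₗ anti k H

variable (A : Type*) [Ring A] [Algebra k A]

/-- `act` makes `A` a left `H`-module algebra:
`act` is a representation of `H`, `h•(ab) = Σ (h⁽¹⁾•a)(h⁽²⁾•b)` and `h•1 = ε(h)1`. -/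
def IsModAlg (act : H →ₗ[k] Module.End k A) : Prop :=
  act 1 = 1 ∧ (∀ g h : H, act (g * h) = act g * act h) ∧
  (∀ (h : H) (a b : A),
    act h (a * b) = LinearMap.mul' k A ((pairAct k H act) (comulL k H h) (a ⊗ₜ b))) ∧
  (∀ h : H, act h 1 = (counitL k H h) • (1 : A))

/-- The adjoint-type action of `H` on `End_k(A)`: `h.X = Σ ρ(h⁽¹⁾) ∘ X ∘ ρ(γ(h⁽²⁾))`. -/
noncomputable def dotAct (act : H →ₗ[k] Module.End k A) :
    H →ₗ[k] Module.End k A →ₗ[k] Module.End k A :=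
  (sandwich k H (E := Module.End k A) act (act ∘ₗ anti k H)) ∘ₗ comulL k H



section Aux
open Coalgebra HopfAlgebra

variable {k H}

theorem anti_one : anti k H 1 = 1 := by
  have h := mul_antipode_rTensor_comul_apply (R := k) (A := H) 1
  simp only [Bialgebra.comul_one, Bialgebra.counit_one, map_one] at h
  rw [Algebra.TensorProduct.one_def] at h
  simpa [anti] using h

/-- Product of two comultiplication representations. -/
def reprMul {ι κ : Type*} {a b : H} (ra : Coalgebra.Repr k a ι) (rb : Coalgebra.Repr k b κ) :
    Coalgebra.Repr k (a * b) (ι × κ) where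
  index := ra.index ×ˢ rb.index
  left p := ra.left p.1 * rb.left p.2
  right p := ra.right p.1 * rb.right p.2
  eq := by
    rw [Bialgebra.comul_mul, ← ra.eq, ← rb.eq, Finset.sum_mul_sum, Finset.sum_product]
    simp [Algebra.TensorProduct.tmul_mul_tmul]

@[simp] theorem reprMul_index {ι κ : Type*} {a b : H} (ra : Coalgebra.Repr k a ι) (rb : Coalgebra.Repr k b κ) :
    (reprMul ra rb).index = ra.index ×ˢ rb.index := rfl

@[simp] theorem reprMul_left {ι κ : Type*} {a b : H} (ra : Coalgebra.Repr k a ι) (rb : Coalgebra.Repr k b κ)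
    (p : ι × κ) : (reprMul ra rb).left p = ra.left p.1 * rb.left p.2 := rfl

@[simp] theorem reprMul_right {ι κ : Type*} {a b : H} (ra : Coalgebra.Repr k a ι) (rb : Coalgebra.Repr k b κ)
    (p : ι × κ) : (reprMul ra rb).right p = ra.right p.1 * rb.right p.2 := rfl

theorem sum_counit_smul {ι : Type*} {a : H} (r : Coalgebra.Repr k a ι) :
    ∑ i ∈ r.index, counit (R := k) (r.left i) • r.right i = a := by
  have h := sum_counit_tmul_eq (R := k) r
  have := congrArg (TensorProduct.lid k H) h
  simp only [map_sum, TensorProduct.lid_tmul, one_smul] at this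
  exact this

theorem sum_smul_counit {ι : Type*} {a : H} (r : Coalgebra.Repr k a ι) :
    ∑ i ∈ r.index, counit (R := k) (r.right i) • r.left i = a := by
  have h := sum_tmul_counit_eq (R := k) r
  have := congrArg (TensorProduct.rid k H) h
  simp only [map_sum, TensorProduct.rid_tmul, one_smul] at this
  exact this

/-- A trilinear map `x ⊗ (y ⊗ z) ↦ A1 x * (A2 y * A3 z)`. -/
def trimap (A1 A2 A3 : H →ₗ[k] H) : H ⊗[k] (H ⊗[k] H) →ₗ[k] H :=
  LinearMap.mul' k H ∘ₗ
    TensorProduct.map A1 (LinearMap.mul' k H ∘ₗ TensorProduct.map A2 A3)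

@[simp] theorem trimap_tmul (A1 A2 A3 : H →ₗ[k] H) (x y z : H) :
    trimap A1 A2 A3 (x ⊗ₜ (y ⊗ₜ z)) = A1 x * (A2 y * A3 z) := rfl

local notation "γ" => HopfAlgebra.antipode (R := k) (A := H)

theorem antipode_mul (a b : H) : γ (a * b) = γ b * γ a := by
  classical
  set ra := Coalgebra.Repr.arbitrary k a with hra
  set rb := Coalgebra.Repr.arbitrary k b with hrb
  set ral : (i : H × H) → Coalgebra.Repr k (ra.left i) (H × H) :=
    fun i => Coalgebra.Repr.arbitrary k _ with hral
  set rar : (i : H × H) → Coalgebra.Repr k (ra.right i) (H × H) :=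
    fun i => Coalgebra.Repr.arbitrary k _ with hrar
  set rbl : (p : H × H) → Coalgebra.Repr k (rb.left p) (H × H) :=
    fun p => Coalgebra.Repr.arbitrary k _ with hrbl
  set rbr : (p : H × H) → Coalgebra.Repr k (rb.right p) (H × H) :=
    fun p => Coalgebra.Repr.arbitrary k _ with hrbr
  -- collapse of the `b`-side
  have hb : ∀ e f w : H, (∑ p ∈ rb.index, ∑ n ∈ (rbl p).index,
      γ (e * (rbl p).left n) * ((f * (rbl p).right n) * (γ (rb.right p) * w)))
      = γ (e * b) * (f * w) := by
    intro e f w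
    have E := Coalgebra.sum_tmul_tmul_eq (R := k) rb rbl rbr
    have h2 := congrArg (trimap (HopfAlgebra.antipode k ∘ₗ LinearMap.mulLeft k e)
      (LinearMap.mulLeft k f) (LinearMap.mulRight k w ∘ₗ HopfAlgebra.antipode k)) E
    simp only [map_sum, trimap_tmul, LinearMap.comp_apply, LinearMap.mulLeft_apply,
      LinearMap.mulRight_apply] at h2
    rw [h2]
    have h3 : ∀ p ∈ rb.index, (∑ q ∈ (rbr p).index,
        γ (e * rb.left p) * ((f * (rbr p).left q) * (γ ((rbr p).right q) * w)))
        = Coalgebra.counit (R := k) (rb.right p) • (γ (e * rb.left p) * (f * w)) := by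
      intro p _
      rw [← Finset.mul_sum]
      have hinner : (∑ q ∈ (rbr p).index, (f * (rbr p).left q) * (γ ((rbr p).right q) * w))
          = Coalgebra.counit (R := k) (rb.right p) • (f * w) := by
        calc ∑ q ∈ (rbr p).index, (f * (rbr p).left q) * (γ ((rbr p).right q) * w)
            = (∑ q ∈ (rbr p).index, f * ((rbr p).left q * γ ((rbr p).right q))) * w := by
              rw [Finset.sum_mul]
              exact Finset.sum_congr rfl fun q _ => by simp only [mul_assoc]
          _ = (f * (Coalgebra.counit (R := k) (rb.right p) • (1 : H))) * w := by
              rw [← Finset.mul_sum, HopfAlgebra.sum_mul_antipode_eq_smul (rbr p)]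
          _ = Coalgebra.counit (R := k) (rb.right p) • (f * w) := by
              rw [mul_smul_comm, mul_one, smul_mul_assoc]
      rw [hinner, mul_smul_comm]
    rw [Finset.sum_congr rfl h3]
    calc ∑ p ∈ rb.index, Coalgebra.counit (R := k) (rb.right p) • (γ (e * rb.left p) * (f * w))
        = (∑ p ∈ rb.index, Coalgebra.counit (R := k) (rb.right p) • γ (e * rb.left p)) * (f * w) := by
          rw [Finset.sum_mul]
          exact Finset.sum_congr rfl fun p _ => (smul_mul_assoc _ _ _).symm
      _ = γ (e * b) * (f * w) := by
          congr 1
          have : γ (e * b) = ∑ p ∈ rb.index,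
              Coalgebra.counit (R := k) (rb.right p) • γ (e * rb.left p) := by
            conv_lhs => rw [← _root_.sum_smul_counit rb, Finset.mul_sum]
            rw [map_sum]
            exact Finset.sum_congr rfl fun p _ => by rw [mul_smul_comm, map_smul]
          rw [this]
  -- expansions of `γ a` and `γ b`
  have hga : γ a = ∑ i ∈ ra.index, Coalgebra.counit (R := k) (ra.left i) • γ (ra.right i) := by
    conv_lhs => rw [← _root_.sum_counit_smul ra]
    rw [map_sum]
    exact Finset.sum_congr rfl fun i _ => map_smul _ _ _
  have hgb : γ b = ∑ p ∈ rb.index, Coalgebra.counit (R := k) (rb.left p) • γ (rb.right p) := by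
    conv_lhs => rw [← _root_.sum_counit_smul rb]
    rw [map_sum]
    exact Finset.sum_congr rfl fun p _ => map_smul _ _ _
  calc γ (a * b)
      = ∑ i ∈ ra.index, ∑ m ∈ (ral i).index,
          γ ((ral i).left m * b) * ((ral i).right m * γ (ra.right i)) := by
        have E := Coalgebra.sum_tmul_tmul_eq (R := k) ra ral rar
        have h2 := congrArg (trimap (HopfAlgebra.antipode k ∘ₗ LinearMap.mulRight k b)
          LinearMap.id (HopfAlgebra.antipode k)) E
        simp only [map_sum, trimap_tmul, LinearMap.comp_apply, LinearMap.mulRight_apply,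
          LinearMap.id_coe, id_eq] at h2
        rw [h2]
        have h5 : ∀ i ∈ ra.index, (∑ j ∈ (rar i).index,
            γ (ra.left i * b) * ((rar i).left j * γ ((rar i).right j)))
            = Coalgebra.counit (R := k) (ra.right i) • γ (ra.left i * b) := by
          intro i _
          rw [← Finset.mul_sum, HopfAlgebra.sum_mul_antipode_eq_smul (rar i), mul_smul_comm,
            mul_one]
        rw [Finset.sum_congr rfl h5]
        conv_lhs => rw [← _root_.sum_smul_counit ra, Finset.sum_mul]
        rw [map_sum]
        exact Finset.sum_congr rfl fun i _ => by rw [smul_mul_assoc, map_smul]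
    _ = ∑ i ∈ ra.index, ∑ m ∈ (ral i).index, ∑ p ∈ rb.index, ∑ n ∈ (rbl p).index,
          γ ((ral i).left m * (rbl p).left n) *
            (((ral i).right m * (rbl p).right n) * (γ (rb.right p) * γ (ra.right i))) := by
        exact Finset.sum_congr rfl fun i _ => Finset.sum_congr rfl fun m _ =>
          (hb ((ral i).left m) ((ral i).right m) (γ (ra.right i))).symm
    _ = ∑ p ∈ rb.index, ∑ i ∈ ra.index, ∑ m ∈ (ral i).index, ∑ n ∈ (rbl p).index,
          γ ((ral i).left m * (rbl p).left n) *
            (((ral i).right m * (rbl p).right n) * (γ (rb.right p) * γ (ra.right i))) := by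
        rw [Finset.sum_comm]
        exact Finset.sum_congr rfl fun p _ => Finset.sum_comm
    _ = ∑ p ∈ rb.index, ∑ i ∈ ra.index,
          algebraMap k H (Coalgebra.counit (R := k) (ra.left i * rb.left p)) *
            (γ (rb.right p) * γ (ra.right i)) := by
        refine Finset.sum_congr rfl fun p _ => Finset.sum_congr rfl fun i _ => ?_
        rw [← HopfAlgebra.sum_antipode_mul_eq_algebraMap_counit (reprMul (ral i) (rbl p)), Finset.sum_mul]
        simp only [reprMul_index, reprMul_left, reprMul_right]
        rw [← Finset.sum_product']
        exact Finset.sum_congr rfl fun x _ => by simp only [mul_assoc]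
    _ = γ b * γ a := by
        rw [hga, hgb, Finset.sum_mul_sum]
        refine Finset.sum_congr rfl fun p _ => Finset.sum_congr rfl fun i _ => ?_
        rw [smul_mul_assoc, mul_smul_comm, smul_smul, mul_comm, ← Bialgebra.counit_mul,
          Algebra.smul_def]

theorem anti_mul (x y : H) : anti k H (x * y) = anti k H y * anti k H x :=
  _root_.antipode_mul x y

theorem hopf_r (f : H) :
    LinearMap.mul' k H (TensorProduct.map (anti k H) LinearMap.id (Coalgebra.comul f))
      = algebraMap k H (Coalgebra.counit f) :=
  HopfAlgebra.mul_antipode_rTensor_comul_apply f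

theorem hopf_l (f : H) :
    LinearMap.mul' k H (TensorProduct.map LinearMap.id (anti k H) (Coalgebra.comul f))
      = algebraMap k H (Coalgebra.counit f) :=
  HopfAlgebra.mul_antipode_lTensor_comul_apply f

section Ginv

variable (γinv : H →ₗ[k] H)

theorem ginv_mul (hγ1 : ∀ h : H, γinv (anti k H h) = h) (hγ2 : ∀ h : H, anti k H (γinv h) = h)
    (x y : H) : γinv (x * y) = γinv y * γinv x := by
  conv_lhs => rw [← hγ2 x, ← hγ2 y, ← anti_mul]
  rw [hγ1]

theorem ginv_one (hγ1 : ∀ h : H, γinv (anti k H h) = h) : γinv 1 = 1 := by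
  conv_lhs => rw [← anti_one (k := k) (H := H)]
  rw [hγ1]

end Ginv
section Maps

/-- `x ⊗ (y ⊗ z) ↦ (γ(x) y) ⊗ z`. -/
def mapA : H ⊗[k] (H ⊗[k] H) →ₗ[k] H ⊗[k] H :=
  TensorProduct.map (LinearMap.mul' k H ∘ₗ TensorProduct.map (anti k H) LinearMap.id)
      LinearMap.id ∘ₗ (TensorProduct.assoc k H H H).symm.toLinearMap

@[simp] theorem mapA_tmul (x y z : H) :
    mapA (k := k) (H := H) (x ⊗ₜ (y ⊗ₜ z)) = (anti k H x * y) ⊗ₜ z := rfl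

/-- `x ⊗ y ↦ x γ(y)`. -/
def mapB : H ⊗[k] H →ₗ[k] H :=
  LinearMap.mul' k H ∘ₗ TensorProduct.map LinearMap.id (anti k H)

@[simp] theorem mapB_tmul (x y : H) :
    mapB (k := k) (H := H) (x ⊗ₜ y) = x * anti k H y := rfl

variable (γinv : H →ₗ[k] H)

/-- `x ⊗ (y ⊗ z) ↦ x ⊗ (γ⁻¹(z) y)`. -/
def mapC : H ⊗[k] (H ⊗[k] H) →ₗ[k] H ⊗[k] H :=
  TensorProduct.map LinearMap.id
    (LinearMap.mul' k H ∘ₗ TensorProduct.map γinv LinearMap.id ∘ₗ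
      (TensorProduct.comm k H H).toLinearMap)

@[simp] theorem mapC_tmul (x y z : H) :
    mapC (k := k) (H := H) γinv (x ⊗ₜ (y ⊗ₜ z)) = x ⊗ₜ (γinv z * y) := rfl

/-- `x ⊗ y ↦ y γ⁻¹(x)`. -/
def mapD : H ⊗[k] H →ₗ[k] H :=
  LinearMap.mul' k H ∘ₗ TensorProduct.map LinearMap.id γinv ∘ₗ
    (TensorProduct.comm k H H).toLinearMap

@[simp] theorem mapD_tmul (x y : H) :
    mapD (k := k) (H := H) γinv (x ⊗ₜ y) = y * γinv x := rfl

theorem zeta_eq (Finv : H ⊗[k] H) : zeta k H γinv Finv = mapD γinv Finv := rfl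

theorem theta_eq (F : H ⊗[k] H) :
    theta k H F = LinearMap.mul' k H (TensorProduct.map (anti k H) LinearMap.id F) := rfl

@[simp] theorem sandwich_tmul {E : Type*} [Ring E] [Algebra k E] (α β : H →ₗ[k] E)
    (x y : H) (a : E) : sandwich k H α β (x ⊗ₜ y) a = α x * (a * β y) := rfl

end Maps
set_option synthInstance.maxHeartbeats 400000

section Key

theorem mapA_mul_right (u : H ⊗[k] (H ⊗[k] H)) (v : H ⊗[k] H) :
    mapA (u * ((1 : H) ⊗ₜ v)) = mapA u * v := by
  induction u using TensorProduct.induction_on with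
  | zero => simp
  | add u1 u2 e1 e2 => simp only [add_mul, map_add, e1, e2]
  | tmul x w =>
    rw [Algebra.TensorProduct.tmul_mul_tmul, mul_one]
    induction w using TensorProduct.induction_on with
    | zero => simp
    | add w1 w2 e1 e2 =>
      simp only [add_mul, TensorProduct.tmul_add, map_add, e1, e2]
    | tmul y z =>
      induction v using TensorProduct.induction_on with
      | zero => simp
      | add v1 v2 e1 e2 => simp only [mul_add, TensorProduct.tmul_add, map_add, e1, e2]
      | tmul p q =>
        rw [Algebra.TensorProduct.tmul_mul_tmul]
        simp [mul_assoc]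

theorem mapA_assoc_mul (u : (H ⊗[k] H) ⊗[k] H) (v : H ⊗[k] H) :
    mapA ((TensorProduct.assoc k H H H) (u * (v ⊗ₜ (1 : H)))) =
      LinearMap.rTensor H (sandwich k H (anti k H) LinearMap.id v)
        (mapA ((TensorProduct.assoc k H H H) u)) := by
  induction u using TensorProduct.induction_on with
  | zero => simp
  | add u1 u2 e1 e2 => simp only [add_mul, map_add, e1, e2]
  | tmul w z =>
    rw [Algebra.TensorProduct.tmul_mul_tmul, mul_one]
    induction w using TensorProduct.induction_on with
    | zero => simp
    | add w1 w2 e1 e2 =>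
      simp only [add_mul, TensorProduct.add_tmul, map_add, e1, e2]
    | tmul x y =>
      induction v using TensorProduct.induction_on with
      | zero => simp
      | add v1 v2 e1 e2 =>
        simp only [mul_add, TensorProduct.add_tmul, map_add, LinearMap.rTensor_add,
          LinearMap.add_apply, e1, e2]
      | tmul f g =>
        rw [Algebra.TensorProduct.tmul_mul_tmul]
        simp [anti_mul, mul_assoc]

theorem mapA_collapse (u : H ⊗[k] H) :
    mapA ((TensorProduct.assoc k H H H) (TensorProduct.map (comulL k H) LinearMap.id u)) =
      TensorProduct.map (Algebra.linearMap k H ∘ₗ counitL k H) LinearMap.id u := by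
  have key : ∀ (d : H ⊗[k] H) (z : H),
      mapA ((TensorProduct.assoc k H H H) (d ⊗ₜ z)) =
        (LinearMap.mul' k H (TensorProduct.map (anti k H) LinearMap.id d)) ⊗ₜ z := by
    intro d z
    induction d using TensorProduct.induction_on with
    | zero => simp
    | tmul x y => simp
    | add d1 d2 e1 e2 => simp [TensorProduct.add_tmul, e1, e2]
  induction u using TensorProduct.induction_on with
  | zero => simp
  | add u1 u2 e1 e2 => simp only [map_add, e1, e2]
  | tmul f g =>
    rw [TensorProduct.map_tmul, key]
    simp [comulL, counitL, hopf_r]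

theorem mapEps_id (F : H ⊗[k] H)
    (h4 : (TensorProduct.lid k H) (TensorProduct.map (counitL k H) LinearMap.id F) = 1) :
    TensorProduct.map (Algebra.linearMap k H ∘ₗ counitL k H) LinearMap.id F
      = (1 : H) ⊗ₜ (1 : H) := by
  have step : ∀ u : H ⊗[k] H,
      TensorProduct.map (Algebra.linearMap k H ∘ₗ counitL k H) LinearMap.id u
        = LinearMap.rTensor H (Algebra.linearMap k H)
            (TensorProduct.map (counitL k H) LinearMap.id u) := by
    intro u
    induction u using TensorProduct.induction_on with
    | zero => simp
    | tmul x y => simp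
    | add u1 u2 e1 e2 => simp only [map_add, e1, e2]
  have h4' : TensorProduct.map (counitL k H) LinearMap.id F = (1 : k) ⊗ₜ (1 : H) := by
    apply (TensorProduct.lid k H).injective
    rw [h4]; simp
  rw [step, h4']
  simp

theorem mapEps_id_l (F : H ⊗[k] H)
    (h5 : (TensorProduct.rid k H) (TensorProduct.map LinearMap.id (counitL k H) F) = 1) :
    TensorProduct.map LinearMap.id (Algebra.linearMap k H ∘ₗ counitL k H) F
      = (1 : H) ⊗ₜ (1 : H) := by
  have step : ∀ u : H ⊗[k] H,
      TensorProduct.map LinearMap.id (Algebra.linearMap k H ∘ₗ counitL k H) u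
        = LinearMap.lTensor H (Algebra.linearMap k H)
            (TensorProduct.map LinearMap.id (counitL k H) u) := by
    intro u
    induction u using TensorProduct.induction_on with
    | zero => simp
    | tmul x y => simp
    | add u1 u2 e1 e2 => simp only [map_add, e1, e2]
  have h5' : TensorProduct.map LinearMap.id (counitL k H) F = (1 : H) ⊗ₜ (1 : k) := by
    apply (TensorProduct.rid k H).injective
    rw [h5]; simp
  rw [step, h5']
  simp

theorem sandwich_one_anti (u : H ⊗[k] H) :
    sandwich k H (anti k H) LinearMap.id u 1
      = LinearMap.mul' k H (TensorProduct.map (anti k H) LinearMap.id u) := by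
  induction u using TensorProduct.induction_on with
  | zero => simp
  | tmul x y => simp
  | add u1 u2 e1 e2 => simp [e1, e2]

theorem mapB_mapA_collapse (u : H ⊗[k] H) :
    mapB (mapA (TensorProduct.map LinearMap.id (comulL k H) u)) =
      anti k H ((TensorProduct.rid k H) (TensorProduct.map LinearMap.id (counitL k H) u)) := by
  have key : ∀ (x : H) (d : H ⊗[k] H),
      mapB (mapA (x ⊗ₜ d)) =
        anti k H x * LinearMap.mul' k H (TensorProduct.map LinearMap.id (anti k H) d) := by
    intro x d
    induction d using TensorProduct.induction_on with
    | zero => simp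
    | tmul y z => simp [mul_assoc]
    | add d1 d2 e1 e2 => simp [TensorProduct.tmul_add, mul_add, e1, e2]
  induction u using TensorProduct.induction_on with
  | zero => simp
  | add u1 u2 e1 e2 => simp only [map_add, e1, e2]
  | tmul f g =>
    rw [TensorProduct.map_tmul, key]
    simp [comulL, counitL, hopf_l, Algebra.algebraMap_eq_smul_one, mul_smul_comm]

theorem mapB_smul_left (c : H) (u : H ⊗[k] H) :
    mapB ((c ⊗ₜ (1 : H)) * u) = c * mapB u := by
  induction u using TensorProduct.induction_on with
  | zero => simp
  | tmul x y =>
    rw [Algebra.TensorProduct.tmul_mul_tmul, one_mul]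
    simp [mul_assoc]
  | add u1 u2 e1 e2 => simp [mul_add, e1, e2]

end Key
section Key2

variable (γinv : H →ₗ[k] H)

theorem mapB_eq_anti_mapD (hγ2 : ∀ h : H, anti k H (γinv h) = h) (u : H ⊗[k] H) :
    mapB u = anti k H (mapD γinv u) := by
  induction u using TensorProduct.induction_on with
  | zero => simp
  | tmul x y => simp [anti_mul, hγ2]
  | add u1 u2 e1 e2 => simp [e1, e2]

theorem mapC_assoc_mul (u : (H ⊗[k] H) ⊗[k] H) (v : H ⊗[k] H) :
    mapC γinv ((TensorProduct.assoc k H H H) (u * (v ⊗ₜ (1 : H)))) =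
      mapC γinv ((TensorProduct.assoc k H H H) u) * v := by
  induction u using TensorProduct.induction_on with
  | zero => simp
  | add u1 u2 e1 e2 => simp only [add_mul, map_add, e1, e2]
  | tmul w z =>
    rw [Algebra.TensorProduct.tmul_mul_tmul, mul_one]
    induction w using TensorProduct.induction_on with
    | zero => simp
    | add w1 w2 e1 e2 =>
      simp only [add_mul, TensorProduct.add_tmul, map_add, e1, e2]
    | tmul x y =>
      induction v using TensorProduct.induction_on with
      | zero => simp
      | add v1 v2 e1 e2 =>
        simp only [mul_add, TensorProduct.add_tmul, map_add, e1, e2]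
      | tmul f g =>
        rw [Algebra.TensorProduct.tmul_mul_tmul]
        simp [mul_assoc]

theorem mapC_mul_right (hγ1 : ∀ h : H, γinv (anti k H h) = h)
    (hγ2 : ∀ h : H, anti k H (γinv h) = h) (u : H ⊗[k] (H ⊗[k] H)) (v : H ⊗[k] H) :
    mapC γinv (u * ((1 : H) ⊗ₜ v)) =
      LinearMap.lTensor H (sandwich k H γinv LinearMap.id ((TensorProduct.comm k H H) v))
        (mapC γinv u) := by
  induction u using TensorProduct.induction_on with
  | zero => simp
  | add u1 u2 e1 e2 => simp only [add_mul, map_add, e1, e2]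
  | tmul x w =>
    rw [Algebra.TensorProduct.tmul_mul_tmul, mul_one]
    induction w using TensorProduct.induction_on with
    | zero => simp
    | add w1 w2 e1 e2 =>
      simp only [add_mul, TensorProduct.tmul_add, map_add, e1, e2]
    | tmul y z =>
      induction v using TensorProduct.induction_on with
      | zero => simp
      | add v1 v2 e1 e2 =>
        simp only [mul_add, TensorProduct.tmul_add, map_add, LinearMap.lTensor_add,
          LinearMap.add_apply, e1, e2]
      | tmul f g =>
        rw [Algebra.TensorProduct.tmul_mul_tmul]
        simp [ginv_mul γinv hγ1 hγ2, mul_assoc]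

theorem anti_inner_r (hγ2 : ∀ h : H, anti k H (γinv h) = h) (u : H ⊗[k] H) :
    anti k H (LinearMap.mul' k H (TensorProduct.map γinv LinearMap.id
        ((TensorProduct.comm k H H) u))) =
      LinearMap.mul' k H (TensorProduct.map (anti k H) LinearMap.id u) := by
  induction u using TensorProduct.induction_on with
  | zero => simp
  | tmul x y => simp [anti_mul, hγ2]
  | add u1 u2 e1 e2 => simp [e1, e2]

theorem anti_mapD (hγ2 : ∀ h : H, anti k H (γinv h) = h) (u : H ⊗[k] H) :
    anti k H (mapD γinv u) =
      LinearMap.mul' k H (TensorProduct.map LinearMap.id (anti k H) u) := by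
  induction u using TensorProduct.induction_on with
  | zero => simp
  | tmul x y => simp [anti_mul, hγ2]
  | add u1 u2 e1 e2 => simp [e1, e2]

theorem I1 (hγ1 : ∀ h : H, γinv (anti k H h) = h) (hγ2 : ∀ h : H, anti k H (γinv h) = h)
    (h : H) :
    LinearMap.mul' k H (TensorProduct.map γinv LinearMap.id
        ((TensorProduct.comm k H H) (Coalgebra.comul h))) = algebraMap k H (Coalgebra.counit h) := by
  have inj : Function.Injective (anti k H) := Function.LeftInverse.injective hγ1
  apply inj
  rw [anti_inner_r γinv hγ2, hopf_r]
  simp [Algebra.algebraMap_eq_smul_one, anti_one]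

theorem I2 (hγ1 : ∀ h : H, γinv (anti k H h) = h) (hγ2 : ∀ h : H, anti k H (γinv h) = h)
    (h : H) : mapD γinv (Coalgebra.comul h) = algebraMap k H (Coalgebra.counit h) := by
  have inj : Function.Injective (anti k H) := Function.LeftInverse.injective hγ1
  apply inj
  rw [anti_mapD γinv hγ2, hopf_l]
  simp [Algebra.algebraMap_eq_smul_one, anti_one]

theorem mapC_collapse (hγ1 : ∀ h : H, γinv (anti k H h) = h)
    (hγ2 : ∀ h : H, anti k H (γinv h) = h) (u : H ⊗[k] H) :
    mapC γinv (TensorProduct.map LinearMap.id (comulL k H) u) =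
      TensorProduct.map LinearMap.id (Algebra.linearMap k H ∘ₗ counitL k H) u := by
  induction u using TensorProduct.induction_on with
  | zero => simp
  | add u1 u2 e1 e2 => simp only [map_add, e1, e2]
  | tmul f g =>
    simp only [mapC, TensorProduct.map_tmul, LinearMap.comp_apply, LinearMap.id_coe, id_eq,
      LinearEquiv.coe_coe]
    rw [show comulL k H g = Coalgebra.comul g from rfl, I1 γinv hγ1 hγ2]
    simp [counitL]

theorem mapD_mapC_collapse (hγ1 : ∀ h : H, γinv (anti k H h) = h)
    (hγ2 : ∀ h : H, anti k H (γinv h) = h) (u : H ⊗[k] H) :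
    mapD γinv (mapC γinv ((TensorProduct.assoc k H H H)
        (TensorProduct.map (comulL k H) LinearMap.id u))) =
      γinv ((TensorProduct.lid k H) (TensorProduct.map (counitL k H) LinearMap.id u)) := by
  have key : ∀ (d : H ⊗[k] H) (g : H),
      mapD γinv (mapC γinv ((TensorProduct.assoc k H H H) (d ⊗ₜ g)))
        = γinv g * mapD γinv d := by
    intro d g
    induction d using TensorProduct.induction_on with
    | zero => simp
    | tmul x y => simp [mul_assoc]
    | add d1 d2 e1 e2 => simp [TensorProduct.add_tmul, mul_add, e1, e2]
  induction u using TensorProduct.induction_on with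
  | zero => simp
  | add u1 u2 e1 e2 => simp only [map_add, e1, e2]
  | tmul f g =>
    rw [TensorProduct.map_tmul, key]
    rw [show comulL k H f = Coalgebra.comul f from rfl, I2 γinv hγ1 hγ2]
    simp [counitL, Algebra.algebraMap_eq_smul_one, mul_smul_comm]

theorem mapD_smul_left (c : H) (u : H ⊗[k] H) :
    mapD γinv (((1 : H) ⊗ₜ c) * u) = c * mapD γinv u := by
  induction u using TensorProduct.induction_on with
  | zero => simp
  | tmul x y =>
    rw [Algebra.TensorProduct.tmul_mul_tmul, one_mul]
    simp [mul_assoc]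
  | add u1 u2 e1 e2 => simp [mul_add, e1, e2]

theorem sandwich_one_ginv (hγ1 : ∀ h : H, γinv (anti k H h) = h)
    (hγ2 : ∀ h : H, anti k H (γinv h) = h) (u : H ⊗[k] H) :
    sandwich k H γinv LinearMap.id ((TensorProduct.comm k H H) u) 1
      = γinv (LinearMap.mul' k H (TensorProduct.map (anti k H) LinearMap.id u)) := by
  induction u using TensorProduct.induction_on with
  | zero => simp
  | tmul x y => simp [ginv_mul γinv hγ1 hγ2, hγ1]
  | add u1 u2 e1 e2 => simp [e1, e2]

end Key2
end Aux

/-- For a twisting cocycle `F` of `H`, the elements `ϑ = Σ γ(F₁)F₂` and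
`ζ = Σ F̄₂ γ⁻¹(F̄₁)` are mutually "inverse up to antipode": `ϑ⁻¹ = γ(ζ)` and `ζ⁻¹ = γ⁻¹(ϑ)`. -/
theorem twist_theta_zeta_inverse
    (F Finv : H ⊗[k] H) (hF : IsCocycle k H F Finv)
    (γinv : H →ₗ[k] H)
    (hγ1 : ∀ h : H, γinv (anti k H h) = h) (hγ2 : ∀ h : H, anti k H (γinv h) = h) :
    theta k H F * anti k H (zeta k H γinv Finv) = 1 ∧
    anti k H (zeta k H γinv Finv) * theta k H F = 1 ∧
    zeta k H γinv Finv * γinv (theta k H F) = 1 ∧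
    γinv (theta k H F) * zeta k H γinv Finv = 1 := by
  obtain ⟨h1, h2, h3, h4, h5⟩ := hF
  -- Chain 1 : ϑ · γ(ζ) = 1
  have e1 : mapA ((TensorProduct.map LinearMap.id (comulL k H) F) * ((1 : H) ⊗ₜ F))
      = theta k H F ⊗ₜ (1 : H) := by
    rw [← h3, mapA_assoc_mul, mapA_collapse, mapEps_id F h4, LinearMap.rTensor_tmul,
      sandwich_one_anti]
    rfl
  have e2 : mapA (TensorProduct.map LinearMap.id (comulL k H) F)
      = (theta k H F ⊗ₜ (1 : H)) * Finv := by
    have e0 := mapA_mul_right (TensorProduct.map LinearMap.id (comulL k H) F) F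
    rw [e1] at e0
    calc mapA (TensorProduct.map LinearMap.id (comulL k H) F)
        = mapA (TensorProduct.map LinearMap.id (comulL k H) F) * (F * Finv) := by
          rw [h1, mul_one]
      _ = (mapA (TensorProduct.map LinearMap.id (comulL k H) F) * F) * Finv := by
          rw [mul_assoc]
      _ = (theta k H F ⊗ₜ (1 : H)) * Finv := by rw [← e0]
  have G1 : theta k H F * anti k H (zeta k H γinv Finv) = 1 := by
    have hb1 : mapB (mapA (TensorProduct.map LinearMap.id (comulL k H) F)) = 1 := by
      rw [mapB_mapA_collapse, h5, anti_one]
    rw [e2, mapB_smul_left] at hb1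
    rw [zeta_eq, ← mapB_eq_anti_mapD γinv hγ2 Finv]
    exact hb1
  -- Chain 2 : γ⁻¹(ϑ) · ζ = 1
  have f1 : mapC γinv ((TensorProduct.map LinearMap.id (comulL k H) F) * ((1 : H) ⊗ₜ F))
      = (1 : H) ⊗ₜ γinv (theta k H F) := by
    rw [mapC_mul_right γinv hγ1 hγ2, mapC_collapse γinv hγ1 hγ2, mapEps_id_l F h5,
      LinearMap.lTensor_tmul, sandwich_one_ginv γinv hγ1 hγ2]
    rfl
  have f3 : mapC γinv ((TensorProduct.assoc k H H H)
        (TensorProduct.map (comulL k H) LinearMap.id F))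
      = ((1 : H) ⊗ₜ γinv (theta k H F)) * Finv := by
    have f2 := mapC_assoc_mul γinv (TensorProduct.map (comulL k H) LinearMap.id F) F
    rw [h3, f1] at f2
    calc mapC γinv ((TensorProduct.assoc k H H H)
            (TensorProduct.map (comulL k H) LinearMap.id F))
        = mapC γinv ((TensorProduct.assoc k H H H)
            (TensorProduct.map (comulL k H) LinearMap.id F)) * (F * Finv) := by
          rw [h1, mul_one]
      _ = (mapC γinv ((TensorProduct.assoc k H H H)
            (TensorProduct.map (comulL k H) LinearMap.id F)) * F) * Finv := by
          rw [mul_assoc]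
      _ = ((1 : H) ⊗ₜ γinv (theta k H F)) * Finv := by rw [← f2]
  have G4 : γinv (theta k H F) * zeta k H γinv Finv = 1 := by
    have hd1 : mapD γinv (mapC γinv ((TensorProduct.assoc k H H H)
        (TensorProduct.map (comulL k H) LinearMap.id F))) = 1 := by
      rw [mapD_mapC_collapse γinv hγ1 hγ2, h4, ginv_one γinv hγ1]
    rw [f3, mapD_smul_left] at hd1
    rw [zeta_eq]
    exact hd1
  have G2 : anti k H (zeta k H γinv Finv) * theta k H F = 1 := by
    have := congrArg (anti k H) G4
    rwa [anti_mul, hγ2, anti_one] at this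
  have G3 : zeta k H γinv Finv * γinv (theta k H F) = 1 := by
    have := congrArg γinv G1
    rwa [ginv_mul γinv hγ1 hγ2, hγ1, ginv_one γinv hγ1] at this
  exact ⟨G1, G2, G3, G4⟩

end
end

section
/- Let F be a twisting cocycle for the Hopf algebra H. Then in H⊗H the following two identities hold: Σ F₁⁽¹⁾ ⊗ γ(F₁⁽²⁾)F₂ = Σ F̄₁ ⊗ γ(F̄₂)ϑ, and Σ γ(F₁)F₂⁽¹⁾ ⊗ F₂⁽²⁾ = Σ ϑF̄₁ ⊗ F̄₂, where Σ F₁⁽¹⁾⊗F₁⁽²⁾⊗F₂ denotes (Δ⊗id)(F) and Σ F₁⊗F₂⁽¹⁾⊗F₂⁽²⁾ denotes (id⊗Δ)(F). -/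
open TensorProduct

noncomputable section

variable (k : Type*) [Field k] (H : Type*) [Ring H] [HopfAlgebra k H]

variable (A : Type*) [Ring A] [Algebra k A]

section TwistAux

variable {R : Type*} {A : Type*} [CommRing R] [Ring A] [HopfAlgebra R A]
variable {ι κ : Type*}

open Coalgebra HopfAlgebra

lemma antipode_one' : antipode (R := R) (1 : A) = 1 := by
  have h := mul_antipode_rTensor_comul_apply (R := R) (1 : A)
  simpa [Algebra.TensorProduct.one_def] using h

lemma counit_smul_right (a : A) (r : Coalgebra.Repr R a ι) :
    ∑ i ∈ r.index, counit (R := R) (r.left i) • r.right i = a := by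
  have h := congrArg (TensorProduct.lid R A) (Coalgebra.sum_counit_tmul_eq (R := R) r)
  simp only [map_sum, lid_tmul, one_smul] at h
  exact h

lemma counit_smul_left (a : A) (r : Coalgebra.Repr R a ι) :
    ∑ i ∈ r.index, counit (R := R) (r.right i) • r.left i = a := by
  have h := congrArg (TensorProduct.rid R A) (Coalgebra.sum_tmul_counit_eq (R := R) r)
  simp only [map_sum, rid_tmul, one_smul] at h
  exact h

lemma sum_csar (a y : A) (r : Coalgebra.Repr R a ι) :
    ∑ i ∈ r.index, counit (R := R) (r.left i) • antipode (R := R) (r.right i * y)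
      = antipode (R := R) (a * y) := by
  conv_rhs => rw [← counit_smul_right a r]
  rw [Finset.sum_mul, map_sum]
  exact Finset.sum_congr rfl fun i _ => by rw [smul_mul_assoc, map_smul]

lemma sum_csal (b x : A) (r : Coalgebra.Repr R b ι) :
    ∑ j ∈ r.index, counit (R := R) (r.left j) • antipode (R := R) (x * r.right j)
      = antipode (R := R) (x * b) := by
  conv_rhs => rw [← counit_smul_right b r]
  rw [Finset.mul_sum, map_sum]
  exact Finset.sum_congr rfl fun j _ => by rw [mul_smul_comm, map_smul]

lemma sum_csa (a : A) (r : Coalgebra.Repr R a ι) :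
    ∑ i ∈ r.index, counit (R := R) (r.right i) • antipode (R := R) (r.left i)
      = antipode (R := R) a := by
  conv_rhs => rw [← counit_smul_left a r]
  rw [map_sum]
  exact Finset.sum_congr rfl fun i _ => by rw [map_smul]

noncomputable def mulRepr (a b : A) (ra : Coalgebra.Repr R a ι) (rb : Coalgebra.Repr R b κ) :
    Coalgebra.Repr R (a * b) (ι × κ) where
  index := ra.index ×ˢ rb.index
  left := fun s => ra.left s.1 * rb.left s.2
  right := fun s => ra.right s.1 * rb.right s.2
  eq := by
    have h : CoalgebraStruct.comul (R := R) (a * b) = comul a * comul b :=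
      Bialgebra.comul_mul a b
    rw [h, ← ra.eq, ← rb.eq, Finset.sum_mul_sum, Finset.sum_product]
    simp [Algebra.TensorProduct.tmul_mul_tmul]

lemma sum_mul_mul_antipode (x y : A) (rx : Coalgebra.Repr R x ι) (ry : Coalgebra.Repr R y κ) :
    ∑ p ∈ rx.index, ∑ q ∈ ry.index,
      (rx.left p * ry.left q) * antipode (R := R) (rx.right p * ry.right q)
      = (counit (R := R) x * counit (R := R) y) • (1 : A) := by
  have h := sum_mul_antipode_eq_smul (mulRepr x y rx ry)
  rw [← Finset.sum_product'] at *
  simpa [mulRepr, Bialgebra.counit_mul] using h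
noncomputable def Umap : ((A ⊗[R] (A ⊗[R] A)) ⊗[R] (A ⊗[R] (A ⊗[R] A))) →ₗ[R] A :=
  (LinearMap.mul' R A)
    ∘ₗ (TensorProduct.map LinearMap.id (LinearMap.mul' R A))
    ∘ₗ (TensorProduct.map
          ((LinearMap.mul' R A) ∘ₗ (TensorProduct.map (antipode (R := R)) (antipode (R := R)))
            ∘ₗ (TensorProduct.comm R A A).toLinearMap)
          ((TensorProduct.map (LinearMap.mul' R A)
            ((antipode (R := R)) ∘ₗ (LinearMap.mul' R A)))
           ∘ₗ (TensorProduct.tensorTensorTensorComm R A A A A).toLinearMap))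
    ∘ₗ (TensorProduct.tensorTensorTensorComm R A (A ⊗[R] A) A (A ⊗[R] A)).toLinearMap

lemma Umap_tmul (x1 x2 x3 y1 y2 y3 : A) :
    Umap (R:=R) ((x1 ⊗ₜ (x2 ⊗ₜ x3)) ⊗ₜ (y1 ⊗ₜ (y2 ⊗ₜ y3))) =
      (antipode (R := R) y1 * antipode (R := R) x1) *
        ((x2 * y2) * antipode (R := R) (x3 * y3)) := by
  simp [Umap]

lemma antipode_mul' (a b : A) :
    antipode (R := R) (a * b) = antipode (R := R) b * antipode (R := R) a := by
  classical
  let ra := Coalgebra.Repr.arbitrary R a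
  let rb := Coalgebra.Repr.arbitrary R b
  let pa : ∀ i, Coalgebra.Repr R (ra.left i) (A × A) := fun i => Coalgebra.Repr.arbitrary R _
  let qa : ∀ i, Coalgebra.Repr R (ra.right i) (A × A) := fun i => Coalgebra.Repr.arbitrary R _
  let pb : ∀ j, Coalgebra.Repr R (rb.left j) (A × A) := fun j => Coalgebra.Repr.arbitrary R _
  let qb : ∀ j, Coalgebra.Repr R (rb.right j) (A × A) := fun j => Coalgebra.Repr.arbitrary R _
  have ha := Coalgebra.sum_tmul_tmul_eq (R := R) ra pa qa
  have hb := Coalgebra.sum_tmul_tmul_eq (R := R) rb pb qb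
  have key := congrArg (Umap (R := R) (A := A)) (congrArg₂ (· ⊗ₜ[R] ·) ha hb)
  simp only [TensorProduct.sum_tmul, TensorProduct.tmul_sum, map_sum, Umap_tmul] at key
  have Lval :
      (∑ j ∈ rb.index, ∑ q ∈ (pb j).index, ∑ i ∈ ra.index, ∑ p ∈ (pa i).index,
        (antipode (R := R) ((pb j).left q) * antipode (R := R) ((pa i).left p)) *
          (((pa i).right p * (pb j).right q) * antipode (R := R) (ra.right i * rb.right j)))
      = antipode (R := R) (a * b) := by
    calc
      _ = ∑ j ∈ rb.index, ∑ q ∈ (pb j).index, ∑ i ∈ ra.index,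
            counit (R := R) (ra.left i) •
              (antipode (R := R) ((pb j).left q) *
                ((pb j).right q * antipode (R := R) (ra.right i * rb.right j))) := by
          refine Finset.sum_congr rfl fun j _ => Finset.sum_congr rfl fun q _ =>
            Finset.sum_congr rfl fun i _ => ?_
          have h1 : (∑ p ∈ (pa i).index,
              (antipode (R := R) ((pb j).left q) * antipode (R := R) ((pa i).left p)) *
                (((pa i).right p * (pb j).right q) * antipode (R := R) (ra.right i * rb.right j)))
              = antipode (R := R) ((pb j).left q) *
                  ((∑ p ∈ (pa i).index, antipode (R := R) ((pa i).left p) * (pa i).right p) *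
                    ((pb j).right q * antipode (R := R) (ra.right i * rb.right j))) := by
            rw [Finset.sum_mul, Finset.mul_sum]
            exact Finset.sum_congr rfl fun p _ => by simp only [mul_assoc]
          rw [h1, sum_antipode_mul_eq_smul (pa i), smul_mul_assoc, one_mul, mul_smul_comm]
      _ = ∑ j ∈ rb.index, ∑ q ∈ (pb j).index,
            antipode (R := R) ((pb j).left q) *
              ((pb j).right q * antipode (R := R) (a * rb.right j)) := by
          refine Finset.sum_congr rfl fun j _ => Finset.sum_congr rfl fun q _ => ?_
          have h2 : (∑ i ∈ ra.index,
              counit (R := R) (ra.left i) •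
                (antipode (R := R) ((pb j).left q) *
                  ((pb j).right q * antipode (R := R) (ra.right i * rb.right j))))
              = antipode (R := R) ((pb j).left q) *
                  ((pb j).right q *
                    (∑ i ∈ ra.index, counit (R := R) (ra.left i) •
                      antipode (R := R) (ra.right i * rb.right j))) := by
            simp only [Finset.mul_sum, mul_smul_comm]
          rw [h2, sum_csar a (rb.right j) ra]
      _ = ∑ j ∈ rb.index,
            counit (R := R) (rb.left j) • antipode (R := R) (a * rb.right j) := by
          refine Finset.sum_congr rfl fun j _ => ?_
          have h3 : (∑ q ∈ (pb j).index,
              antipode (R := R) ((pb j).left q) *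
                ((pb j).right q * antipode (R := R) (a * rb.right j)))
              = (∑ q ∈ (pb j).index, antipode (R := R) ((pb j).left q) * (pb j).right q) *
                  antipode (R := R) (a * rb.right j) := by
            rw [Finset.sum_mul]
            exact Finset.sum_congr rfl fun q _ => by simp only [mul_assoc]
          rw [h3, sum_antipode_mul_eq_smul (pb j), smul_mul_assoc, one_mul]
      _ = antipode (R := R) (a * b) := sum_csal b a rb
  have Rval :
      (∑ j ∈ rb.index, ∑ q ∈ (qb j).index, ∑ i ∈ ra.index, ∑ p ∈ (qa i).index,
        (antipode (R := R) (rb.left j) * antipode (R := R) (ra.left i)) *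
          (((qa i).left p * (qb j).left q) *
            antipode (R := R) ((qa i).right p * (qb j).right q)))
      = antipode (R := R) b * antipode (R := R) a := by
    calc
      _ = ∑ j ∈ rb.index, ∑ i ∈ ra.index,
            (antipode (R := R) (rb.left j) * antipode (R := R) (ra.left i)) *
              (∑ p ∈ (qa i).index, ∑ q ∈ (qb j).index,
                ((qa i).left p * (qb j).left q) *
                  antipode (R := R) ((qa i).right p * (qb j).right q)) := by
          refine Finset.sum_congr rfl fun j _ => ?_
          rw [Finset.sum_comm]
          refine Finset.sum_congr rfl fun i _ => ?_
          rw [Finset.sum_comm]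
          simp only [Finset.mul_sum]
      _ = ∑ j ∈ rb.index, ∑ i ∈ ra.index,
            (counit (R := R) (ra.right i) * counit (R := R) (rb.right j)) •
              (antipode (R := R) (rb.left j) * antipode (R := R) (ra.left i)) := by
          refine Finset.sum_congr rfl fun j _ => Finset.sum_congr rfl fun i _ => ?_
          rw [sum_mul_mul_antipode (ra.right i) (rb.right j) (qa i) (qb j),
            mul_smul_comm, mul_one]
      _ = ∑ j ∈ rb.index,
            counit (R := R) (rb.right j) •
              (antipode (R := R) (rb.left j) * antipode (R := R) a) := by
          refine Finset.sum_congr rfl fun j _ => ?_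
          have h4 : (∑ i ∈ ra.index,
              (counit (R := R) (ra.right i) * counit (R := R) (rb.right j)) •
                (antipode (R := R) (rb.left j) * antipode (R := R) (ra.left i)))
              = counit (R := R) (rb.right j) •
                  (antipode (R := R) (rb.left j) *
                    (∑ i ∈ ra.index, counit (R := R) (ra.right i) •
                      antipode (R := R) (ra.left i))) := by
            simp only [Finset.mul_sum, Finset.smul_sum, mul_smul_comm]
            refine Finset.sum_congr rfl fun i _ => ?_
            rw [mul_comm (counit (R := R) (ra.right i)), mul_smul]
          rw [h4, sum_csa a ra]
      _ = antipode (R := R) b * antipode (R := R) a := by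
          have h5 : (∑ j ∈ rb.index,
              counit (R := R) (rb.right j) •
                (antipode (R := R) (rb.left j) * antipode (R := R) a))
              = (∑ j ∈ rb.index, counit (R := R) (rb.right j) •
                  antipode (R := R) (rb.left j)) * antipode (R := R) a := by
            rw [Finset.sum_mul]
            exact Finset.sum_congr rfl fun j _ => by rw [smul_mul_assoc]
          rw [h5, sum_csa b rb]
  rw [← Lval, ← Rval]
  exact key

end TwistAux

lemma psiL0 (y : H ⊗[k] H) (b c : H) :
    LinearMap.mul' k H (TensorProduct.map (anti k H) LinearMap.id (y * (b ⊗ₜ c)))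
      = anti k H b * LinearMap.mul' k H (TensorProduct.map (anti k H) LinearMap.id y) * c := by
  induction y using TensorProduct.induction_on with
  | zero => simp
  | tmul y1 y2 =>
      simp only [Algebra.TensorProduct.tmul_mul_tmul, TensorProduct.map_tmul,
        LinearMap.mul'_apply, LinearMap.id_coe, id_eq]
      rw [show anti k H (y1 * b) = anti k H b * anti k H y1 from antipode_mul' y1 b]
      simp only [mul_assoc]
  | add u v hu hv => simp only [add_mul, map_add, hu, hv, mul_add]

lemma psiDelta (v : H) :
    LinearMap.mul' k H (TensorProduct.map (anti k H) LinearMap.id (comulL k H v))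
      = counitL k H v • 1 := by
  have h := HopfAlgebra.mul_antipode_rTensor_comul_apply (R := k) v
  rw [Algebra.algebraMap_eq_smul_one] at h
  exact h

lemma psiL0d (v : H) (w : H ⊗[k] H) :
    LinearMap.mul' k H (TensorProduct.map (anti k H) LinearMap.id (comulL k H v * w))
      = counitL k H v • LinearMap.mul' k H (TensorProduct.map (anti k H) LinearMap.id w) := by
  induction w using TensorProduct.induction_on with
  | zero => simp
  | tmul b c =>
      rw [psiL0, psiDelta]
      simp only [TensorProduct.map_tmul, LinearMap.mul'_apply, LinearMap.id_coe, id_eq]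
      rw [mul_smul_comm, smul_mul_assoc, mul_one]
  | add u v' hu hv => simp only [mul_add, map_add, smul_add, hu, hv]

lemma mapIdPsi_L1 (x : H ⊗[k] H) (q : H ⊗[k] (H ⊗[k] H)) :
    TensorProduct.map LinearMap.id
        ((LinearMap.mul' k H) ∘ₗ TensorProduct.map (anti k H) LinearMap.id)
        ((TensorProduct.map LinearMap.id (comulL k H) x) * q)
      = ((TensorProduct.rid k H) (TensorProduct.map LinearMap.id (counitL k H) x) ⊗ₜ (1 : H)) *
          (TensorProduct.map LinearMap.id
            ((LinearMap.mul' k H) ∘ₗ TensorProduct.map (anti k H) LinearMap.id) q) := by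
  induction x using TensorProduct.induction_on with
  | zero => simp
  | tmul u v =>
      induction q using TensorProduct.induction_on with
      | zero => simp
      | tmul a w =>
          simp only [TensorProduct.map_tmul, LinearMap.id_coe, id_eq,
            Algebra.TensorProduct.tmul_mul_tmul, LinearMap.comp_apply,
            TensorProduct.rid_tmul]
          rw [psiL0d]
          simp only [tmul_smul, smul_tmul', smul_mul_assoc, one_mul]
      | add q1 q2 h1 h2 => simp only [mul_add, map_add, h1, h2]
  | add x1 x2 h1 h2 => simp only [map_add, add_mul, h1, h2, add_tmul]

lemma mapIdPsi_L2 (y z : H ⊗[k] H) :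
    TensorProduct.map LinearMap.id
        ((LinearMap.mul' k H) ∘ₗ TensorProduct.map (anti k H) LinearMap.id)
        (((1 : H) ⊗ₜ y) * (TensorProduct.assoc k H H H) (z ⊗ₜ (1 : H)))
      = TensorProduct.map LinearMap.id
          ((LinearMap.mulRight k
            (LinearMap.mul' k H (TensorProduct.map (anti k H) LinearMap.id y))) ∘ₗ anti k H)
          z := by
  induction z using TensorProduct.induction_on with
  | zero =>
      rw [zero_tmul, LinearEquiv.map_zero, mul_zero, LinearMap.map_zero, LinearMap.map_zero]
  | tmul c d =>
      simp only [TensorProduct.assoc_tmul, Algebra.TensorProduct.tmul_mul_tmul,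
        TensorProduct.map_tmul, LinearMap.id_coe, id_eq, LinearMap.comp_apply,
        LinearMap.mulRight_apply, one_mul]
      rw [psiL0, mul_one]
  | add z1 z2 h1 h2 => simp only [tmul_add, add_tmul, map_add, mul_add, h1, h2]

lemma mapPsiId_L1 (x : H ⊗[k] H) (q : (H ⊗[k] H) ⊗[k] H) :
    TensorProduct.map
        ((LinearMap.mul' k H) ∘ₗ TensorProduct.map (anti k H) LinearMap.id) LinearMap.id
        ((TensorProduct.map (comulL k H) LinearMap.id x) * q)
      = ((1 : H) ⊗ₜ (TensorProduct.lid k H) (TensorProduct.map (counitL k H) LinearMap.id x)) *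
          (TensorProduct.map
            ((LinearMap.mul' k H) ∘ₗ TensorProduct.map (anti k H) LinearMap.id) LinearMap.id q) := by
  induction x using TensorProduct.induction_on with
  | zero => simp
  | tmul u v =>
      induction q using TensorProduct.induction_on with
      | zero => simp
      | tmul w c =>
          simp only [TensorProduct.map_tmul, LinearMap.id_coe, id_eq,
            Algebra.TensorProduct.tmul_mul_tmul, LinearMap.comp_apply,
            TensorProduct.lid_tmul]
          rw [psiL0d]
          simp only [one_mul, smul_mul_assoc, smul_tmul]
      | add q1 q2 h1 h2 => simp only [mul_add, map_add, h1, h2]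
  | add x1 x2 h1 h2 => simp only [map_add, add_mul, h1, h2, tmul_add]

lemma mapPsiId_L2 (y z : H ⊗[k] H) :
    TensorProduct.map
        ((LinearMap.mul' k H) ∘ₗ TensorProduct.map (anti k H) LinearMap.id) LinearMap.id
        ((y ⊗ₜ (1 : H)) * (TensorProduct.assoc k H H H).symm ((1 : H) ⊗ₜ z))
      = TensorProduct.map
          (LinearMap.mulLeft k
            (LinearMap.mul' k H (TensorProduct.map (anti k H) LinearMap.id y))) LinearMap.id
          z := by
  induction z using TensorProduct.induction_on with
  | zero =>
      rw [tmul_zero, LinearEquiv.map_zero, mul_zero, LinearMap.map_zero, LinearMap.map_zero]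
  | tmul c d =>
      simp only [TensorProduct.assoc_symm_tmul, Algebra.TensorProduct.tmul_mul_tmul,
        TensorProduct.map_tmul, LinearMap.id_coe, id_eq, LinearMap.comp_apply,
        LinearMap.mulLeft_apply, mul_one]
      rw [psiL0, show anti k H (1 : H) = 1 from antipode_one', one_mul, one_mul]
  | add z1 z2 h1 h2 => simp only [tmul_add, add_tmul, map_add, mul_add, h1, h2]

/-- For a twisting cocycle `F`:
`Σ F₁⁽¹⁾ ⊗ γ(F₁⁽²⁾)F₂ = Σ F̄₁ ⊗ γ(F̄₂)ϑ` and `Σ γ(F₁)F₂⁽¹⁾ ⊗ F₂⁽²⁾ = Σ ϑF̄₁ ⊗ F̄₂`. -/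
theorem twist_antipode_identities
    (F Finv : H ⊗[k] H) (hF : IsCocycle k H F Finv) :
    (TensorProduct.map LinearMap.id
        ((LinearMap.mul' k H) ∘ₗ TensorProduct.map (anti k H) LinearMap.id))
      ((TensorProduct.assoc k H H H) (TensorProduct.map (comulL k H) LinearMap.id F))
      = TensorProduct.map LinearMap.id
          ((LinearMap.mulRight k (theta k H F)) ∘ₗ anti k H) Finv ∧
    (TensorProduct.map
        ((LinearMap.mul' k H) ∘ₗ TensorProduct.map (anti k H) LinearMap.id) LinearMap.id)
      ((TensorProduct.assoc k H H H).symm (TensorProduct.map LinearMap.id (comulL k H) F))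
      = TensorProduct.map (LinearMap.mulLeft k (theta k H F)) LinearMap.id Finv := by
  obtain ⟨h1, h2, h3, h4, h5⟩ := hF
  have hma : ∀ X Y : (H ⊗[k] H) ⊗[k] H,
      (TensorProduct.assoc k H H H) (X * Y)
        = (TensorProduct.assoc k H H H) X * (TensorProduct.assoc k H H H) Y :=
    fun X Y => map_mul (Algebra.TensorProduct.assoc k k k H H H) X Y
  have hmas : ∀ X Y : H ⊗[k] (H ⊗[k] H),
      (TensorProduct.assoc k H H H).symm (X * Y)
        = (TensorProduct.assoc k H H H).symm X * (TensorProduct.assoc k H H H).symm Y :=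
    fun X Y => map_mul (Algebra.TensorProduct.assoc k k k H H H).symm X Y
  constructor
  · have hFF : (F ⊗ₜ (1 : H)) * (Finv ⊗ₜ (1 : H)) = (1 : (H ⊗[k] H) ⊗[k] H) := by
      rw [Algebra.TensorProduct.tmul_mul_tmul, h1, mul_one, ← Algebra.TensorProduct.one_def]
    have E : (TensorProduct.assoc k H H H) (TensorProduct.map (comulL k H) LinearMap.id F)
        = (TensorProduct.map LinearMap.id (comulL k H) F) *
            (((1 : H) ⊗ₜ F) * (TensorProduct.assoc k H H H) (Finv ⊗ₜ (1 : H))) := by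
      conv_lhs => rw [show TensorProduct.map (comulL k H) LinearMap.id F
        = (TensorProduct.map (comulL k H) LinearMap.id F * (F ⊗ₜ (1 : H))) * (Finv ⊗ₜ (1 : H))
        from by rw [mul_assoc, hFF, mul_one]]
      rw [hma, h3, mul_assoc]
    rw [E, mapIdPsi_L1, h5, mapIdPsi_L2, ← Algebra.TensorProduct.one_def, one_mul]
    rfl
  · have hFF2 : (((1 : H) ⊗ₜ F) * ((1 : H) ⊗ₜ Finv) : H ⊗[k] (H ⊗[k] H)) = 1 := by
      rw [Algebra.TensorProduct.tmul_mul_tmul, h1, mul_one, ← Algebra.TensorProduct.one_def]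
    have E2 : (TensorProduct.assoc k H H H).symm (TensorProduct.map LinearMap.id (comulL k H) F)
        = (TensorProduct.map (comulL k H) LinearMap.id F) *
            ((F ⊗ₜ (1 : H)) *
              (TensorProduct.assoc k H H H).symm ((1 : H) ⊗ₜ Finv)) := by
      conv_lhs => rw [show TensorProduct.map LinearMap.id (comulL k H) F
        = (TensorProduct.map LinearMap.id (comulL k H) F * ((1 : H) ⊗ₜ F)) * ((1 : H) ⊗ₜ Finv)
        from by rw [mul_assoc, hFF2, mul_one]]
      rw [← h3, hmas, LinearEquiv.symm_apply_apply, mul_assoc]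
    rw [E2, mapPsiId_L1, h4, mapPsiId_L2, ← Algebra.TensorProduct.one_def, one_mul]
    rfl


end
end

section
/- Let F be a twisting cocycle for the Hopf algebra H and let A be a left H-module algebra. On the k-vector space A⊗H define two bilinear multiplications: the smash product m((a⊗h),(b⊗k)) := Σ a·(h⁽¹⁾•b) ⊗ h⁽²⁾k, and the twisted smash product m̃((a⊗h),(b⊗k)) := Σ (a ∗ (h⁽¹̃⁾•b)) ⊗ h⁽²̃⁾k, where a∗b := Σ (F₁•a)(F₂•b) and Δ̃(h) = Σ h⁽¹̃⁾⊗h⁽²̃⁾. Then the k-linear map Φ: A⊗H → A⊗H given by Φ(a⊗h) := Σ (F₁•a) ⊗ F₂h is bijective and multiplicative: Φ(m̃(x,y)) = m(Φ(x),Φ(y)) for all x,y ∈ A⊗H, and Φ(1⊗1) = 1⊗1. -/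
open TensorProduct

noncomputable section

variable (k : Type*) [Field k] (H : Type*) [Ring H] [HopfAlgebra k H]

variable (A : Type*) [Ring A] [Algebra k A]

section Smash

variable (act : H →ₗ[k] Module.End k A)

/-- The linear endomorphism of `A ⊗ H` given by `b ⊗ l ↦ Σ (h⁽¹⁾ • b) ⊗ (h⁽²⁾ l)`
for a comultiplication-like map `δ`. -/
noncomputable def smashAct (δ : H →ₗ[k] H ⊗[k] H) : H →ₗ[k] (A ⊗[k] H →ₗ[k] A ⊗[k] H) :=
  (TensorProduct.homTensorHomMap (RingHom.id k) A H A H) ∘ₗ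
    (TensorProduct.map act (LinearMap.mul k H)) ∘ₗ δ

/-- The smash-product multiplication on `A ⊗ H` built from a left-multiplication-type map
`lA : A →ₗ (A⊗H →ₗ A⊗H)` and an action map `χ : H →ₗ (A⊗H →ₗ A⊗H)`:
`(a ⊗ h)·(b ⊗ l) = lA a (χ h (b ⊗ l))`. -/
noncomputable def smashMul (lA : A →ₗ[k] (A ⊗[k] H →ₗ[k] A ⊗[k] H))
    (χ : H →ₗ[k] (A ⊗[k] H →ₗ[k] A ⊗[k] H)) :
    (A ⊗[k] H) →ₗ[k] (A ⊗[k] H) →ₗ[k] A ⊗[k] H :=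
  TensorProduct.lift
    (((((LinearMap.llcomp k (A ⊗[k] H) (A ⊗[k] H) (A ⊗[k] H)) ∘ₗ lA).flip) ∘ₗ χ).flip)

/-- `Ψ X (a ⊗ h) = Σ (X₁ • a) ⊗ (X₂ h)`. -/
noncomputable def Psi : H ⊗[k] H →ₗ[k] Module.End k (A ⊗[k] H) :=
  (TensorProduct.homTensorHomMap (RingHom.id k) A H A H) ∘ₗ (TensorProduct.map act (LinearMap.mul k H))

lemma Psi_tmul (x y : H) (a : A) (m : H) :
    Psi k H A act (x ⊗ₜ y) (a ⊗ₜ m) = (act x a) ⊗ₜ (y * m) := by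
  simp [Psi]

lemma Psi_mul (h1 : act 1 = 1) (hm : ∀ g h : H, act (g * h) = act g * act h)
    (X Y : H ⊗[k] H) :
    Psi k H A act (X * Y) = Psi k H A act X ∘ₗ Psi k H A act Y := by
  induction X using TensorProduct.induction_on with
  | zero => simp
  | add X₁ X₂ ih1 ih2 => simp [add_mul, ih1, ih2, LinearMap.add_comp]
  | tmul x₁ x₂ =>
    induction Y using TensorProduct.induction_on with
    | zero => simp
    | add Y₁ Y₂ ih1 ih2 => simp [mul_add, ih1, ih2, LinearMap.comp_add]
    | tmul y₁ y₂ =>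
      rw [Algebra.TensorProduct.tmul_mul_tmul]
      apply TensorProduct.ext'
      intro a m
      simp [Psi_tmul, hm, mul_assoc, Module.End.mul_apply]

lemma Psi_one (h1 : act 1 = 1) : Psi k H A act 1 = LinearMap.id := by
  apply TensorProduct.ext'
  intro a m
  rw [Algebra.TensorProduct.one_def, Psi_tmul, h1]
  simp

lemma smashAct_eq (δ : H →ₗ[k] H ⊗[k] H) (h : H) :
    smashAct k H A act δ h = Psi k H A act (δ h) := rfl

lemma smashMul_tmul (lA : A →ₗ[k] (A ⊗[k] H →ₗ[k] A ⊗[k] H))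
    (χ : H →ₗ[k] (A ⊗[k] H →ₗ[k] A ⊗[k] H)) (a : A) (h : H) (y : A ⊗[k] H) :
    smashMul k H A lA χ (a ⊗ₜ h) y = lA a (χ h y) := by
  simp [smashMul]

/-- `Lp (a ⊗ (b ⊗ l)) = (a*b) ⊗ l`. -/
noncomputable def Lp : A ⊗[k] (A ⊗[k] H) →ₗ[k] A ⊗[k] H :=
  (LinearMap.rTensor H (LinearMap.mul' k A)) ∘ₗ (TensorProduct.assoc k A A H).symm.toLinearMap

/-- The action of `H ⊗ (H ⊗ H)` on `A ⊗ (A ⊗ H)` through `act` and `Psi`. -/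
noncomputable def Theta : H ⊗[k] (H ⊗[k] H) →ₗ[k] Module.End k (A ⊗[k] (A ⊗[k] H)) :=
  (TensorProduct.homTensorHomMap (RingHom.id k) A (A ⊗[k] H) A (A ⊗[k] H)) ∘ₗ
    (TensorProduct.map act (Psi k H A act))

lemma Lp_Theta_pure (x y z : H) (a b : A) (l : H) :
    Lp k H A (Theta k H A act (x ⊗ₜ (y ⊗ₜ z)) (a ⊗ₜ (b ⊗ₜ l)))
      = ((act x a) * (act y b)) ⊗ₜ (z * l) := by
  simp [Lp, Theta, Psi_tmul]

lemma keyI (hact : IsModAlg k H A act) (Q P R : H ⊗[k] H) (a b : A) (l : H) :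
    Psi k H A act Q
      (((LinearMap.rTensorHom H) ∘ₗ
          ((TensorProduct.mk k A A).compr₂
            ((LinearMap.mul' k A) ∘ₗ (pairAct k H act) P))) a
        (Psi k H A act R (b ⊗ₜ l)))
    = Lp k H A (Theta k H A act
        (((TensorProduct.assoc k H H H)
            ((TensorProduct.map (comulL k H) LinearMap.id Q) * (P ⊗ₜ (1 : H))))
          * ((1 : H) ⊗ₜ R))
        (a ⊗ₜ (b ⊗ₜ l))) := by
  obtain ⟨h1, hm, hmul, hcu⟩ := hact
  induction R using TensorProduct.induction_on with
  | zero => simp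
  | add R₁ R₂ ih1 ih2 =>
      simp only [map_add, LinearMap.add_apply, TensorProduct.tmul_add, mul_add, ih1, ih2]
  | tmul r₁ r₂ =>
    induction Q using TensorProduct.induction_on with
    | zero => simp
    | add Q₁ Q₂ ih1 ih2 =>
        simp only [map_add, LinearMap.add_apply, add_mul, ih1, ih2]
    | tmul q₁ q₂ =>
      have lAapp : ∀ (g : A ⊗[k] A →ₗ[k] A) (c : A) (m : H),
          ((LinearMap.rTensorHom H) ∘ₗ ((TensorProduct.mk k A A).compr₂ g)) a (c ⊗ₜ m)
            = g (a ⊗ₜ c) ⊗ₜ m := by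
        intro g c m
        simp [LinearMap.coe_rTensorHom]
      rw [Psi_tmul, lAapp, Psi_tmul]
      induction P using TensorProduct.induction_on with
      | zero => simp
      | add P₁ P₂ ih1 ih2 =>
          simp only [LinearMap.comp_apply] at ih1 ih2 ⊢
          simp only [map_add, LinearMap.add_apply, TensorProduct.add_tmul, mul_add, add_mul,
            ih1, ih2]
      | tmul p₁ p₂ =>
        rw [LinearMap.comp_apply]
        have e : ∀ c : A, (pairAct k H act) (p₁ ⊗ₜ p₂) (a ⊗ₜ c) = (act p₁ a) ⊗ₜ (act p₂ c) := by
          intro c; simp [pairAct]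
        rw [e, LinearMap.mul'_apply]
        have e2 : act p₂ (act r₁ b) = act (p₂ * r₁) b := by rw [hm]; rfl
        rw [e2, hmul q₁]
        simp only [TensorProduct.map_tmul, LinearMap.id_coe, id_eq]
        generalize comulL k H q₁ = S
        induction S using TensorProduct.induction_on with
        | zero => simp
        | add S₁ S₂ ih1 ih2 =>
            simp only [map_add, LinearMap.add_apply, TensorProduct.add_tmul, add_mul, mul_add,
              ih1, ih2]
        | tmul s₁ s₂ =>
          rw [show ((s₁ ⊗ₜ[k] s₂) ⊗ₜ[k] q₂) * ((p₁ ⊗ₜ[k] p₂) ⊗ₜ[k] (1 : H))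
                = ((s₁ * p₁) ⊗ₜ[k] (s₂ * p₂)) ⊗ₜ[k] (q₂ * 1) from
              by rw [Algebra.TensorProduct.tmul_mul_tmul, Algebra.TensorProduct.tmul_mul_tmul]]
          rw [mul_one, TensorProduct.assoc_tmul, Algebra.TensorProduct.tmul_mul_tmul,
            Algebra.TensorProduct.tmul_mul_tmul, Lp_Theta_pure]
          have e3 : ∀ c : A, (pairAct k H act) (s₁ ⊗ₜ s₂) ((act p₁ a) ⊗ₜ c)
              = (act s₁ (act p₁ a)) ⊗ₜ (act s₂ c) := by
            intro c; simp [pairAct]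
          rw [e3, LinearMap.mul'_apply]
          have e4 : act s₁ (act p₁ a) = act (s₁ * p₁) a := by rw [hm]; rfl
          have e5 : act s₂ (act (p₂ * r₁) b) = act (s₂ * (p₂ * r₁)) b := by rw [hm s₂ (p₂ * r₁)]; rfl
          rw [e4, e5]
          simp [mul_assoc]

lemma keyII (hact : IsModAlg k H A act) (Q P : H ⊗[k] H) (h : H) (a b : A) (l : H) :
    smashMul k H A ((LinearMap.rTensorHom H) ∘ₗ (LinearMap.mul k A))
      (smashAct k H A act (comulL k H))
      (Psi k H A act Q (a ⊗ₜ h)) (Psi k H A act P (b ⊗ₜ l))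
    = Lp k H A (Theta k H A act
        ((TensorProduct.map LinearMap.id (comulL k H) Q) * ((1 : H) ⊗ₜ ((comulL k H h) * P)))
        (a ⊗ₜ (b ⊗ₜ l))) := by
  obtain ⟨h1, hm, hmul, hcu⟩ := hact
  induction Q using TensorProduct.induction_on with
  | zero => simp
  | add Q₁ Q₂ ih1 ih2 =>
      simp only [map_add, LinearMap.add_apply, add_mul, ih1, ih2]
  | tmul q₁ q₂ =>
    rw [Psi_tmul, smashMul_tmul, smashAct_eq]
    have e : comulL k H (q₂ * h) = comulL k H q₂ * comulL k H h := by
      simpa [comulL] using Bialgebra.comul_mul (R := k) q₂ h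
    have eL : Psi k H A act (comulL k H q₂ * comulL k H h) (Psi k H A act P (b ⊗ₜ l))
        = Psi k H A act ((comulL k H q₂ * comulL k H h) * P) (b ⊗ₜ l) := by
      rw [Psi_mul k H A act h1 hm (comulL k H q₂ * comulL k H h) P]; rfl
    rw [e, eL, TensorProduct.map_tmul]
    rw [show ((LinearMap.id q₁) ⊗ₜ[k] (comulL k H q₂)) * ((1 : H) ⊗ₜ[k] (comulL k H h * P))
          = (q₁ * 1) ⊗ₜ[k] (comulL k H q₂ * (comulL k H h * P)) from
        Algebra.TensorProduct.tmul_mul_tmul _ _ _ _]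
    rw [mul_one, ← mul_assoc]
    generalize (comulL k H q₂ * comulL k H h) * P = W
    induction W using TensorProduct.induction_on with
    | zero => simp
    | add W₁ W₂ ih1 ih2 =>
        simp only [map_add, LinearMap.add_apply, TensorProduct.tmul_add, ih1, ih2]
    | tmul w₁ w₂ =>
      rw [Psi_tmul, Lp_Theta_pure]
      simp [LinearMap.coe_rTensorHom, LinearMap.mul_apply']

/-- The map `Φ : a ⊗ h ↦ Σ (F₁ • a) ⊗ F₂h` is a bijective multiplicative
unital map from the twisted smash product `A∗ ⋊ H̃` to the smash product `A ⋊ H`. -/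
theorem smash_product_twist_iso
    (F Finv : H ⊗[k] H) (hF : IsCocycle k H F Finv)
    (hact : IsModAlg k H A act) :
    Function.Bijective
      ((TensorProduct.homTensorHomMap (RingHom.id k) A H A H)
        ((TensorProduct.map act (LinearMap.mul k H)) F)) ∧
    (∀ x y : A ⊗[k] H,
      (TensorProduct.homTensorHomMap (RingHom.id k) A H A H)
          ((TensorProduct.map act (LinearMap.mul k H)) F)
        (smashMul k H A
          ((LinearMap.rTensorHom H) ∘ₗ
            ((TensorProduct.mk k A A).compr₂
              ((LinearMap.mul' k A) ∘ₗ (pairAct k H act) F)))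
          (smashAct k H A act (comulTw k H F Finv)) x y)
      = smashMul k H A
          ((LinearMap.rTensorHom H) ∘ₗ (LinearMap.mul k A))
          (smashAct k H A act (comulL k H))
          ((TensorProduct.homTensorHomMap (RingHom.id k) A H A H)
            ((TensorProduct.map act (LinearMap.mul k H)) F) x)
          ((TensorProduct.homTensorHomMap (RingHom.id k) A H A H)
            ((TensorProduct.map act (LinearMap.mul k H)) F) y)) ∧
    (TensorProduct.homTensorHomMap (RingHom.id k) A H A H)
        ((TensorProduct.map act (LinearMap.mul k H)) F)
      ((1 : A) ⊗ₜ (1 : H)) = (1 : A) ⊗ₜ (1 : H) := by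
  obtain ⟨hFi1, hFi2, hcoc, hcu1, hcu2⟩ := hF
  have h1 := hact.1
  have hm := hact.2.1
  have hPhi : (TensorProduct.homTensorHomMap (RingHom.id k) A H A H)
      ((TensorProduct.map act (LinearMap.mul k H)) F) = Psi k H A act F := rfl
  refine ⟨?_, ?_, ?_⟩
  · rw [hPhi]
    have e1 : Psi k H A act F ∘ₗ Psi k H A act Finv = LinearMap.id := by
      rw [← Psi_mul k H A act h1 hm, hFi1, Psi_one k H A act h1]
    have e2 : Psi k H A act Finv ∘ₗ Psi k H A act F = LinearMap.id := by
      rw [← Psi_mul k H A act h1 hm, hFi2, Psi_one k H A act h1]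
    refine ⟨Function.LeftInverse.injective (g := Psi k H A act Finv) fun x => ?_,
      Function.RightInverse.surjective (g := Psi k H A act Finv) fun x => ?_⟩
    · rw [← LinearMap.comp_apply, e2]; rfl
    · rw [← LinearMap.comp_apply, e1]; rfl
  · intro x y
    rw [hPhi]
    induction x using TensorProduct.induction_on with
    | zero => simp
    | add x₁ x₂ ih1 ih2 => simp only [map_add, LinearMap.add_apply, ih1, ih2]
    | tmul a h =>
      induction y using TensorProduct.induction_on with
      | zero => simp
      | add y₁ y₂ ih1 ih2 => simp only [map_add, ih1, ih2]
      | tmul b l =>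
        rw [smashMul_tmul, smashAct_eq]
        have hTw : comulTw k H F Finv h = (Finv * comulL k H h) * F := rfl
        rw [hTw, keyI k H A act ⟨h1, hm, hact.2.2.1, hact.2.2.2⟩ F F _ a b l,
          keyII k H A act ⟨h1, hm, hact.2.2.1, hact.2.2.2⟩ F F h a b l]
        have hX : (TensorProduct.assoc k H H H)
              ((TensorProduct.map (comulL k H) LinearMap.id F) * (F ⊗ₜ (1 : H)))
              * ((1 : H) ⊗ₜ ((Finv * comulL k H h) * F))
            = (TensorProduct.map LinearMap.id (comulL k H) F)
              * ((1 : H) ⊗ₜ ((comulL k H h) * F)) := by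
          rw [hcoc, mul_assoc, Algebra.TensorProduct.tmul_mul_tmul, one_mul]
          rw [show F * (Finv * comulL k H h * F) = comulL k H h * F by
            rw [← mul_assoc, ← mul_assoc, hFi1, one_mul]]
        rw [hX]
  · rw [hPhi]
    have key : ∀ X : H ⊗[k] H, Psi k H A act X ((1 : A) ⊗ₜ (1 : H))
        = (1 : A) ⊗ₜ
          ((TensorProduct.lid k H) (TensorProduct.map (counitL k H) LinearMap.id X)) := by
      intro X
      induction X using TensorProduct.induction_on with
      | zero => simp
      | add X₁ X₂ ih1 ih2 => simp only [map_add, LinearMap.add_apply,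
          TensorProduct.tmul_add, ih1, ih2]
      | tmul x y =>
        rw [Psi_tmul, hact.2.2.2 x, TensorProduct.map_tmul, mul_one]
        rw [TensorProduct.smul_tmul, TensorProduct.lid_tmul]
        rfl
    rw [key, hcu1]

end Smash

end
end
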